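/- Let F(T,Y) = ∫₀^{ℏω_D} tanh(√(ξ²+Y)/(2k_B T))/√(ξ²+Y) dξ − 1/(U₀N₀). For fixed T > 0, ∂F/∂Y(T,Y) = (1/(2(2k_B T)³))∫₀^{ℏω_D} g(√(ξ²+Y)/(2k_B T)) dξ, where g(η) = (1/η²)(1/cosh²η − tanh(η)/η); in particular ∂F/∂Y(T,Y) < 0. -/

import Mathlib

open MeasureTheory

noncomputable def g (η : ℝ) : ℝ :=
  if η = 0 then -2/3 else (1/η^2) * (1/(Real.cosh η)^2 - Real.tanh η / η)

section helpers

lemma myHasDerivAt_tanh (x : ℝ) : HasDerivAt Real.tanh (1 / Real.cosh x ^ 2) x := by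
  have h := (Real.hasDerivAt_sinh x).div (Real.hasDerivAt_cosh x) (Real.cosh_pos x).ne'
  have e : (Real.cosh x * Real.cosh x - Real.sinh x * Real.sinh x) / Real.cosh x ^ 2
      = 1 / Real.cosh x ^ 2 := by
    rw [show Real.cosh x * Real.cosh x - Real.sinh x * Real.sinh x
        = Real.cosh x ^ 2 - Real.sinh x ^ 2 by ring, Real.cosh_sq_sub_sinh_sq]
  rw [← e]
  have : (fun y => Real.sinh y / Real.cosh y) = Real.tanh := by
    funext y; rw [Real.tanh_eq_sinh_div_cosh]
  rw [show (Real.sinh / Real.cosh) = (fun y => Real.sinh y / Real.cosh y) from rfl, this] at h; exact h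

lemma continuous_tanh' : Continuous Real.tanh :=
  continuous_iff_continuousAt.2 fun x => (myHasDerivAt_tanh x).continuousAt

lemma sinh_le_mul_cosh (x : ℝ) (hx : 0 ≤ x) : Real.sinh x ≤ x * Real.cosh x := by
  have key : ∀ y : ℝ, HasDerivAt (fun z => z * Real.cosh z - Real.sinh z) (y * Real.sinh y) y := by
    intro y
    have h := ((hasDerivAt_id y).mul (Real.hasDerivAt_cosh y)).sub (Real.hasDerivAt_sinh y)
    exact h.congr_deriv (by simp only [id_eq]; ring)
  have mono : MonotoneOn (fun z => z * Real.cosh z - Real.sinh z) (Set.Ici 0) := by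
    apply monotoneOn_of_deriv_nonneg (convex_Ici 0)
    · exact (Continuous.continuousOn (by continuity))
    · intro y _; exact ((key y).differentiableAt).differentiableWithinAt
    · intro y hy
      rw [interior_Ici] at hy
      rw [(key y).deriv]
      exact mul_nonneg (le_of_lt hy) (Real.sinh_pos_iff.2 hy).le
  have h0 : (fun z => z * Real.cosh z - Real.sinh z) 0 ≤ (fun z => z * Real.cosh z - Real.sinh z) x :=
    mono Set.self_mem_Ici hx hx
  simp at h0
  linarith

lemma tanh_le_self (x : ℝ) (hx : 0 ≤ x) : Real.tanh x ≤ x := by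
  rw [Real.tanh_eq_sinh_div_cosh, div_le_iff₀ (Real.cosh_pos x)]
  exact sinh_le_mul_cosh x hx

lemma tanh_nonneg' (x : ℝ) (hx : 0 ≤ x) : 0 ≤ Real.tanh x := by
  rw [Real.tanh_eq_sinh_div_cosh]
  exact div_nonneg (Real.sinh_nonneg_iff.2 hx) (Real.cosh_pos x).le

lemma g_expand (η : ℝ) (hη : 0 < η) :
    g η = (η - Real.sinh η * Real.cosh η) / (η^3 * Real.cosh η ^ 2) := by
  have hch := Real.cosh_pos η
  unfold g
  rw [if_neg hη.ne', Real.tanh_eq_sinh_div_cosh]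
  field_simp

lemma g_neg (η : ℝ) (hη : 0 ≤ η) : g η < 0 := by
  rcases eq_or_lt_of_le hη with h | h
  · simp [g, ← h]; norm_num
  · rw [g_expand η h]
    apply div_neg_of_neg_of_pos
    · have h1 : η < Real.sinh η := Real.self_lt_sinh_iff.2 h
      have h2 : Real.sinh η ≤ Real.sinh η * Real.cosh η :=
        le_mul_of_one_le_right (Real.sinh_pos_iff.2 h).le (Real.one_le_cosh η)
      linarith
    · have := Real.cosh_pos η; positivity

lemma g_lower (η : ℝ) (hη : 0 ≤ η) : -2 ≤ g η := by
  rcases eq_or_lt_of_le hη with h | h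
  · simp [g, ← h]; norm_num
  · have hch := Real.cosh_pos η
    have hsh : 0 ≤ Real.sinh η := (Real.sinh_pos_iff.2 h).le
    have h1 : Real.sinh (2*η) ≤ (2*η) * Real.cosh (2*η) := sinh_le_mul_cosh _ (by positivity)
    rw [Real.sinh_two_mul, Real.cosh_two_mul] at h1
    have h2 : Real.sinh η ≤ η * Real.cosh η := sinh_le_mul_cosh η h.le
    have hsq : Real.cosh η ^ 2 - Real.sinh η ^ 2 = 1 := Real.cosh_sq_sub_sinh_sq η
    rw [g_expand η h, le_div_iff₀ (by positivity)]
    nlinarith [mul_le_mul h2 h2 hsh (by positivity : (0:ℝ) ≤ η * Real.cosh η), h.le]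

lemma g_abs_le (η : ℝ) (hη : 0 ≤ η) : ‖g η‖ ≤ 2 := by
  rw [Real.norm_eq_abs, abs_le]
  exact ⟨g_lower η hη, by linarith [g_neg η hη]⟩

lemma measurable_g : Measurable g := by
  unfold g
  exact Measurable.ite measurableSet_eq measurable_const
    ((measurable_const.div (measurable_id.pow_const 2)).mul
      ((measurable_const.div ((Real.continuous_cosh.measurable.comp measurable_id).pow_const 2)).sub
        ((continuous_tanh'.measurable.comp measurable_id).div measurable_id)))

lemma hasDerivAt_integrand (c ξ x : ℝ) (hc : 0 < c) (hx : 0 < ξ^2 + x) :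
    HasDerivAt (fun y => Real.tanh (Real.sqrt (ξ^2 + y) / c) / Real.sqrt (ξ^2 + y))
      (1/(2*c^3) * g (Real.sqrt (ξ^2 + x) / c)) x := by
  set s := Real.sqrt (ξ^2 + x) with hs
  have hs0 : 0 < s := Real.sqrt_pos.2 hx
  have hsq : s^2 = ξ^2 + x := Real.sq_sqrt hx.le
  have hsqrt : HasDerivAt (fun y => Real.sqrt (ξ^2 + y)) (1/(2*s)) x := by
    have h1 : HasDerivAt (fun y : ℝ => ξ^2 + y) 1 x := (hasDerivAt_id x).const_add _
    simpa using h1.sqrt hx.ne'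
  have htanh : HasDerivAt (fun y => Real.tanh (Real.sqrt (ξ^2+y)/c))
      (1/Real.cosh (s/c)^2 * (1/(2*s)/c)) x := by
    have h2 := hsqrt.div_const c
    exact (myHasDerivAt_tanh (s/c)).comp x h2
  have hdiv := htanh.div hsqrt hs0.ne'
  refine hdiv.congr_deriv ?_
  have hηne : s/c ≠ 0 := by positivity
  have hch := Real.cosh_pos (s/c)
  unfold g
  rw [if_neg hηne]
  field_simp
  rw [← hsq, Real.sqrt_sq hs0.le]

-- bound on the derivative term
lemma bound_F' (c : ℝ) (hc : 0 < c) (u : ℝ) (hu : 0 ≤ u) :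
    ‖1/(2*c^3) * g (u / c)‖ ≤ 1/c^3 := by
  rw [norm_mul]
  have h1 : ‖(1:ℝ)/(2*c^3)‖ = 1/(2*c^3) := by
    rw [Real.norm_eq_abs, abs_of_pos (by positivity)]
  rw [h1]
  have h2 : ‖g (u/c)‖ ≤ 2 := g_abs_le _ (by positivity)
  calc 1/(2*c^3) * ‖g (u/c)‖ ≤ 1/(2*c^3) * 2 := by
        apply mul_le_mul_of_nonneg_left h2 (by positivity)
    _ = 1/c^3 := by field_simp

lemma bound_h (c : ℝ) (hc : 0 < c) (s : ℝ) (hs : 0 ≤ s) :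
    ‖Real.tanh (s / c) / s‖ ≤ 1/c := by
  rcases eq_or_lt_of_le hs with h | h
  · simp [← h]
    positivity
  · rw [Real.norm_eq_abs, abs_of_nonneg (div_nonneg (tanh_nonneg' _ (by positivity)) hs)]
    rw [div_le_div_iff₀ h hc]
    have := tanh_le_self (s/c) (by positivity)
    calc Real.tanh (s/c) * c ≤ (s/c) * c := by nlinarith
      _ = s := by field_simp
      _ ≤ 1 * s := by linarith

lemma measurable_h (c Y : ℝ) :
    Measurable (fun ξ => Real.tanh (Real.sqrt (ξ^2 + Y) / c) / Real.sqrt (ξ^2 + Y)) := by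
  have h1 : Continuous (fun ξ : ℝ => Real.tanh (Real.sqrt (ξ^2 + Y) / c)) := by
    exact continuous_tanh'.comp ((Real.continuous_sqrt.comp (by continuity)).div_const c)
  have h2 : Continuous (fun ξ : ℝ => Real.sqrt (ξ^2 + Y)) :=
    Real.continuous_sqrt.comp (by continuity)
  exact h1.measurable.div h2.measurable

lemma meas_h (c Y : ℝ) (S : Set ℝ) :
    AEStronglyMeasurable (fun ξ => Real.tanh (Real.sqrt (ξ^2 + Y) / c) / Real.sqrt (ξ^2 + Y))
      (MeasureTheory.volume.restrict S) :=
  (measurable_h c Y).aestronglyMeasurable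

lemma meas_q (c Y : ℝ) (S : Set ℝ) :
    AEStronglyMeasurable (fun ξ =>
      (Real.tanh (Real.sqrt (ξ^2 + Y) / c) / Real.sqrt (ξ^2 + Y)
        - Real.tanh (Real.sqrt (ξ^2 + 0) / c) / Real.sqrt (ξ^2 + 0)) / Y)
      (MeasureTheory.volume.restrict S) :=
  (((measurable_h c Y).sub (measurable_h c 0)).div_const Y).aestronglyMeasurable

lemma meas_g (c Y : ℝ) (S : Set ℝ) :
    AEStronglyMeasurable (fun ξ => g (Real.sqrt (ξ^2 + Y) / c))
      (MeasureTheory.volume.restrict S) := by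
  apply Measurable.aestronglyMeasurable
  exact measurable_g.comp ((Real.continuous_sqrt.comp (by continuity)).div_const c).measurable

lemma integrable_h (c Y ω : ℝ) (hc : 0 < c) (hY : 0 ≤ Y) :
    IntervalIntegrable (fun ξ => Real.tanh (Real.sqrt (ξ^2 + Y) / c) / Real.sqrt (ξ^2 + Y))
      MeasureTheory.volume 0 ω := by
  apply IntervalIntegrable.mono_fun' (g := fun _ => 1/c) intervalIntegrable_const (meas_h c Y _)
  refine Filter.Eventually.of_forall fun ξ => bound_h c hc _ (Real.sqrt_nonneg _)

lemma integrable_g (c Y ω : ℝ) (hc : 0 < c) :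
    IntervalIntegrable (fun ξ => g (Real.sqrt (ξ^2 + Y) / c)) MeasureTheory.volume 0 ω := by
  apply IntervalIntegrable.mono_fun' (g := fun _ => 2) intervalIntegrable_const (meas_g c Y _)
  exact Filter.Eventually.of_forall fun ξ => g_abs_le _ (by positivity)


set_option maxHeartbeats 1000000 in
lemma deriv_at_zero (c ω : ℝ) (hc : 0 < c) (hω : 0 < ω) :
    HasDerivWithinAt
      (fun x => ∫ ξ in (0:ℝ)..ω, Real.tanh (Real.sqrt (ξ^2 + x) / c) / Real.sqrt (ξ^2 + x))
      (1/(2*c^3) * ∫ ξ in (0:ℝ)..ω, g (Real.sqrt (ξ^2 + (0:ℝ)) / c)) (Set.Ici 0) 0 := by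
  rw [hasDerivWithinAt_iff_tendsto_slope, Set.Ici_sdiff_left]
  have key : Filter.Tendsto
      (fun Y => ∫ ξ in (0:ℝ)..ω,
        ((Real.tanh (Real.sqrt (ξ^2 + Y) / c) / Real.sqrt (ξ^2 + Y)
          - Real.tanh (Real.sqrt (ξ^2 + 0) / c) / Real.sqrt (ξ^2 + 0)) / Y))
      (nhdsWithin 0 (Set.Ioi 0))
      (nhds (∫ ξ in (0:ℝ)..ω, 1/(2*c^3) * g (Real.sqrt (ξ^2 + (0:ℝ)) / c))) := by
    apply intervalIntegral.tendsto_integral_filter_of_dominated_convergence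
      (bound := fun _ => 1/c^3)
    · exact Filter.Eventually.of_forall fun Y => meas_q c Y _
    · filter_upwards [self_mem_nhdsWithin] with Y hYpos
      apply Filter.Eventually.of_forall
      intro ξ hmem
      rw [Set.uIoc_of_le hω.le] at hmem
      have hξ : 0 < ξ := hmem.1
      have hξ2 : 0 < ξ^2 := pow_pos hξ 2
      rw [Set.mem_Ioi] at hYpos
      have hder : ∀ θ ∈ Set.Icc (0:ℝ) Y,
          HasDerivWithinAt (fun y => Real.tanh (Real.sqrt (ξ^2 + y) / c) / Real.sqrt (ξ^2 + y))
            (1/(2*c^3) * g (Real.sqrt (ξ^2 + θ) / c)) (Set.Icc 0 Y) θ := by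
        intro θ hθ
        exact (hasDerivAt_integrand c ξ θ hc (by nlinarith [hθ.1])).hasDerivWithinAt
      have hmvt := (convex_Icc (0:ℝ) Y).norm_image_sub_le_of_norm_hasDerivWithin_le hder
        (fun θ _ => bound_F' c hc _ (Real.sqrt_nonneg _))
        (Set.left_mem_Icc.2 hYpos.le) (Set.right_mem_Icc.2 hYpos.le)
      rw [sub_zero] at hmvt
      rw [norm_div, div_le_iff₀ (norm_pos_iff.2 hYpos.ne')]
      calc ‖Real.tanh (Real.sqrt (ξ^2 + Y) / c) / Real.sqrt (ξ^2 + Y)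
            - Real.tanh (Real.sqrt (ξ^2 + 0) / c) / Real.sqrt (ξ^2 + 0)‖
          ≤ 1/c^3 * ‖Y‖ := hmvt
        _ = 1/c^3 * ‖Y‖ := rfl
    · exact intervalIntegrable_const
    · apply Filter.Eventually.of_forall
      intro ξ hmem
      rw [Set.uIoc_of_le hω.le] at hmem
      have hξ : 0 < ξ := hmem.1
      have hd := hasDerivAt_integrand c ξ 0 hc (by nlinarith [pow_pos hξ 2])
      have ht := hasDerivAt_iff_tendsto_slope.1 hd
      have hmono : nhdsWithin (0:ℝ) (Set.Ioi 0) ≤ nhdsWithin 0 {(0:ℝ)}ᶜ :=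
        nhdsWithin_mono 0 (fun x hx => ne_of_gt hx)
      refine (ht.mono_left hmono).congr fun Y => ?_
      rw [slope_def_field, sub_zero]
  rw [intervalIntegral.integral_const_mul] at key
  apply key.congr'
  filter_upwards [self_mem_nhdsWithin] with Y hYpos
  rw [Set.mem_Ioi] at hYpos
  rw [slope_def_field, sub_zero, intervalIntegral.integral_div,
    intervalIntegral.integral_sub (integrable_h c Y ω hc hYpos.le) (integrable_h c 0 ω hc le_rfl)]

end helpers

theorem F_deriv_in_Y (kB ω U₀ N₀ : ℝ) (hkB : 0 < kB) (hω : 0 < ω)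
    (hU : 0 < U₀) (hN : 0 < N₀) (T : ℝ) (hT : 0 < T) :
    ∀ Y : ℝ, 0 ≤ Y →
      HasDerivWithinAt
        (fun Y : ℝ => (∫ ξ in (0:ℝ)..ω,
          Real.tanh (Real.sqrt (ξ^2 + Y) / (2 * kB * T)) / Real.sqrt (ξ^2 + Y))
          - 1 / (U₀ * N₀))
        (1 / (2 * (2 * kB * T)^3) *
          ∫ ξ in (0:ℝ)..ω, g (Real.sqrt (ξ^2 + Y) / (2 * kB * T)))
        (Set.Ici 0) Y ∧
      1 / (2 * (2 * kB * T)^3) *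
        (∫ ξ in (0:ℝ)..ω, g (Real.sqrt (ξ^2 + Y) / (2 * kB * T))) < 0 := by
  set c : ℝ := 2 * kB * T with hcdef
  have hc : 0 < c := by positivity
  intro Y hY
  have hneg : (∫ ξ in (0:ℝ)..ω, g (Real.sqrt (ξ^2 + Y) / c)) < 0 := by
    have hpos : (0:ℝ) < ∫ ξ in (0:ℝ)..ω, -g (Real.sqrt (ξ^2 + Y) / c) := by
      apply intervalIntegral.intervalIntegral_pos_of_pos_on ((integrable_g c Y ω hc).neg)
      · intro x _
        exact neg_pos.2 (g_neg _ (by positivity))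
      · exact hω
    rw [intervalIntegral.integral_neg] at hpos
    linarith
  constructor
  · apply HasDerivWithinAt.sub_const
    rcases eq_or_lt_of_le hY with h0 | hYpos
    · -- Y = 0 case
      rw [← h0]
      exact deriv_at_zero c ω hc hω
    · -- Y > 0 case
      have hmain := intervalIntegral.hasDerivAt_integral_of_dominated_loc_of_deriv_le
        (F := fun x ξ => Real.tanh (Real.sqrt (ξ^2 + x) / c) / Real.sqrt (ξ^2 + x))
        (F' := fun x ξ => 1/(2*c^3) * g (Real.sqrt (ξ^2 + x) / c))
        (bound := fun _ => 1/c^3) (a := 0) (b := ω) (x₀ := Y) (s := Metric.ball Y (Y/2))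
        (Metric.ball_mem_nhds Y (half_pos hYpos))
        (Filter.Eventually.of_forall fun x => meas_h c x _)
        (integrable_h c Y ω hc hY)
        ((meas_g c Y _).const_mul _)
        (Filter.Eventually.of_forall fun ξ _ x _ => bound_F' c hc _ (Real.sqrt_nonneg _))
        intervalIntegrable_const
        (Filter.Eventually.of_forall fun ξ _ x hx => by
          apply hasDerivAt_integrand c ξ x hc
          have : Y/2 < x := by
            have := abs_lt.1 (Metric.mem_ball.1 hx)
            linarith [this.1]
          nlinarith [sq_nonneg ξ])
      have h2 := hmain.2
      rw [intervalIntegral.integral_const_mul] at h2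
      exact h2.hasDerivWithinAt
  · exact mul_neg_of_pos_of_neg (by positivity) hneg
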